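/- For a prime power q and n ≥ 1, the identity S_1(q^n)·S_1(q^n - 1) = S_1(2q^n - 1) - S_1(q^n) holds in F_q(t). -/

import Mathlib

open Finset

/-- `S_1(q^n)·S_1(q^n - 1) = S_1(2q^n - 1) - S_1(q^n)` in `F_q(t)`. -/
theorem stmt_5 (p s q : ℕ) (hp : p.Prime) (hs : 0 < s) (hq : q = p ^ s)
    {F : Type} [Field F] [Fintype F] (hF : Fintype.card F = q)
    (n : ℕ) (hn : 1 ≤ n) :
    (∑ θ : F, ((RatFunc.X + RatFunc.C θ) ^ (q ^ n))⁻¹) *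
        (∑ θ : F, ((RatFunc.X + RatFunc.C θ) ^ (q ^ n - 1))⁻¹) =
      (∑ θ : F, ((RatFunc.X + RatFunc.C θ) ^ (2 * q ^ n - 1))⁻¹) -
        (∑ θ : F, ((RatFunc.X + RatFunc.C θ) ^ (q ^ n))⁻¹) := by
  classical
  haveI := Fact.mk hp
  -- characteristic of F (and of RatFunc F) is p
  obtain ⟨n', hp', hcard⟩ := FiniteField.card F (ringChar F)
  have hpp : ringChar F = p := by
    have hdvd : p ∣ ringChar F ^ (n' : ℕ) := by
      rw [← hcard, hF, hq]
      exact dvd_pow_self p hs.ne'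
    exact ((Nat.prime_dvd_prime_iff_eq hp hp').mp (hp.dvd_of_dvd_pow hdvd)).symm
  haveI hcF : CharP F p := hpp ▸ ringChar.charP F
  haveI hcK : CharP (RatFunc F) p :=
    charP_of_injective_algebraMap (algebraMap F (RatFunc F)).injective p
  -- basic numerology
  have hq2 : 2 ≤ q := by
    rw [hq]
    exact Nat.one_lt_pow hs.ne' hp.one_lt
  simp only [← inv_pow]
  set m := q ^ n with hmdef
  have hm : m = p ^ (s * n) := by rw [hmdef, hq, pow_mul]
  have hm1 : 1 ≤ m := Nat.one_le_pow _ _ (by omega)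
  have hmm : m - 1 + 1 = m := Nat.succ_pred_eq_of_pos hm1
  have h2m : (m - 1) + m = 2 * m - 1 := by omega
  have hu : ∀ θ : F, (RatFunc.X + RatFunc.C θ) ≠ 0 := by
    intro θ
    rw [← RatFunc.algebraMap_X, ← RatFunc.algebraMap_C, ← map_add]
    exact RatFunc.algebraMap_ne_zero (Polynomial.X_add_C_ne_zero θ)
  have hcpow : ∀ c : F, c ^ m = c := by
    intro c
    rw [hmdef, ← hF]
    exact FiniteField.pow_card_pow n c
  -- the key pairwise identity
  have key : ∀ θ η : F, η ≠ θ →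
      (RatFunc.X + RatFunc.C θ)⁻¹ ^ (m - 1) * (RatFunc.X + RatFunc.C η)⁻¹ ^ m =
        RatFunc.C ((η - θ)⁻¹) * (RatFunc.X + RatFunc.C θ)⁻¹ ^ (m - 1) -
          RatFunc.C ((η - θ)⁻¹) * (RatFunc.X + RatFunc.C η)⁻¹ ^ (m - 1) +
          (RatFunc.X + RatFunc.C η)⁻¹ ^ m := by
    intro θ η hne
    have he : η - θ ≠ 0 := sub_ne_zero.mpr hne
    set u := RatFunc.X + RatFunc.C θ with hudef
    set v := RatFunc.X + RatFunc.C η with hvdef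
    have huv : v = u + RatFunc.C (η - θ) := by
      rw [hudef, hvdef, map_sub]; ring
    have huz : u ≠ 0 := hu θ
    have hvz : v ≠ 0 := hu η
    have hD : u⁻¹ - v⁻¹ = RatFunc.C (η - θ) * (u⁻¹ * v⁻¹) := by
      have hvu : RatFunc.C (η - θ) = v - u := by rw [huv]; ring
      rw [hvu]
      field_simp
    have h1 : u⁻¹ ^ m - v⁻¹ ^ m = RatFunc.C (η - θ) * (u⁻¹ ^ m * v⁻¹ ^ m) := by
      have e1 : (u⁻¹ - v⁻¹) ^ m = u⁻¹ ^ m - v⁻¹ ^ m := by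
        rw [hm]; exact sub_pow_char_pow _ _ _
      have e2 := congrArg (· ^ m) hD
      rw [e1, mul_pow, mul_pow, ← map_pow, hcpow] at e2
      exact e2
    have hA : u * u⁻¹ ^ m = u⁻¹ ^ (m - 1) := by
      conv_lhs => rw [← hmm, pow_succ]
      rw [mul_comm u, mul_assoc, inv_mul_cancel₀ (hu θ), mul_one]
    have hB : v * v⁻¹ ^ m = v⁻¹ ^ (m - 1) := by
      conv_lhs => rw [← hmm, pow_succ]
      rw [mul_comm v, mul_assoc, inv_mul_cancel₀ (hu η), mul_one]
    have hce : RatFunc.C ((η - θ)⁻¹) * RatFunc.C (η - θ) = 1 := by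
      rw [← map_mul, inv_mul_cancel₀ he, map_one]
    rw [← hA, ← hB]
    linear_combination (RatFunc.C ((η - θ)⁻¹) * v⁻¹ ^ m) * huv -
      (RatFunc.C ((η - θ)⁻¹) * u) * h1 +
      (v⁻¹ ^ m - u * (u⁻¹ ^ m) * (v⁻¹ ^ m)) * hce
  -- the constant σ
  have hsigma1 : ∀ θ : F, ∑ η ∈ univ.erase θ, RatFunc.C ((η - θ)⁻¹) =
      ∑ d : F, RatFunc.C d⁻¹ := by
    intro θ
    rw [Finset.sum_erase _ (by simp)]
    exact Fintype.sum_equiv (Equiv.subRight θ) _ _ fun η => rfl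
  have hsigma2 : ∀ η : F, ∑ θ ∈ univ.erase η, RatFunc.C ((η - θ)⁻¹) =
      ∑ d : F, RatFunc.C d⁻¹ := by
    intro η
    rw [Finset.sum_erase _ (by simp)]
    exact Fintype.sum_equiv (Equiv.subLeft η) _ _ fun θ => rfl
  -- swapping double sums over off-diagonal pairs
  have hswap : ∀ g : F → F → RatFunc F,
      ∑ θ : F, ∑ η ∈ univ.erase θ, g θ η = ∑ η : F, ∑ θ ∈ univ.erase η, g θ η := by
    intro g
    refine Finset.sum_comm' ?_
    intro x y
    simp only [Finset.mem_univ, Finset.mem_erase, true_and, and_true, ne_comm]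
  -- cast of q vanishes
  have hqzero : ((q : ℕ) : RatFunc F) = 0 := by
    rw [hq]
    push_cast
    rw [CharP.cast_eq_zero (RatFunc F) p]
    exact zero_pow hs.ne'
  -- main computation
  have hmain : (∑ θ : F, (RatFunc.X + RatFunc.C θ)⁻¹ ^ (m - 1) *
        (RatFunc.X + RatFunc.C θ)⁻¹ ^ m) -
      (∑ θ : F, (RatFunc.X + RatFunc.C θ)⁻¹ ^ m) *
        (∑ θ : F, (RatFunc.X + RatFunc.C θ)⁻¹ ^ (m - 1)) =
      ∑ θ : F, (RatFunc.X + RatFunc.C θ)⁻¹ ^ m := by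
    have step1 : ∀ θ : F,
        (RatFunc.X + RatFunc.C θ)⁻¹ ^ m - (∑ η : F, (RatFunc.X + RatFunc.C η)⁻¹ ^ m) =
          -∑ η ∈ univ.erase θ, (RatFunc.X + RatFunc.C η)⁻¹ ^ m := by
      intro θ
      rw [← Finset.add_sum_erase _ _ (Finset.mem_univ θ)]
      ring
    calc (∑ θ : F, (RatFunc.X + RatFunc.C θ)⁻¹ ^ (m - 1) * (RatFunc.X + RatFunc.C θ)⁻¹ ^ m) -
          (∑ θ : F, (RatFunc.X + RatFunc.C θ)⁻¹ ^ m) *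
            (∑ θ : F, (RatFunc.X + RatFunc.C θ)⁻¹ ^ (m - 1))
        = ∑ θ : F, (RatFunc.X + RatFunc.C θ)⁻¹ ^ (m - 1) *
            ((RatFunc.X + RatFunc.C θ)⁻¹ ^ m - ∑ η : F, (RatFunc.X + RatFunc.C η)⁻¹ ^ m) := by
          simp only [mul_sub]
          rw [Finset.sum_sub_distrib, ← Finset.sum_mul]
          ring
      _ = -∑ θ : F, ∑ η ∈ univ.erase θ,
            (RatFunc.X + RatFunc.C θ)⁻¹ ^ (m - 1) * (RatFunc.X + RatFunc.C η)⁻¹ ^ m := by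
          rw [← Finset.sum_neg_distrib]
          refine Finset.sum_congr rfl fun θ _ => ?_
          rw [step1 θ, mul_neg, Finset.mul_sum]
      _ = -∑ θ : F, ∑ η ∈ univ.erase θ,
            (RatFunc.C ((η - θ)⁻¹) * (RatFunc.X + RatFunc.C θ)⁻¹ ^ (m - 1) -
              RatFunc.C ((η - θ)⁻¹) * (RatFunc.X + RatFunc.C η)⁻¹ ^ (m - 1) +
              (RatFunc.X + RatFunc.C η)⁻¹ ^ m) := by
          congr 1
          refine Finset.sum_congr rfl fun θ _ => Finset.sum_congr rfl fun η hη => ?_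
          exact key θ η (Finset.mem_erase.mp hη).1
      _ = -((∑ θ : F, (∑ η ∈ univ.erase θ, RatFunc.C ((η - θ)⁻¹)) *
              (RatFunc.X + RatFunc.C θ)⁻¹ ^ (m - 1)) -
            (∑ θ : F, ∑ η ∈ univ.erase θ,
              RatFunc.C ((η - θ)⁻¹) * (RatFunc.X + RatFunc.C η)⁻¹ ^ (m - 1)) +
            ∑ θ : F, ∑ η ∈ univ.erase θ, (RatFunc.X + RatFunc.C η)⁻¹ ^ m) := by
          congr 1
          simp only [Finset.sum_add_distrib, Finset.sum_sub_distrib, ← Finset.sum_mul]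
      _ = -((∑ θ : F, (∑ d : F, RatFunc.C d⁻¹) * (RatFunc.X + RatFunc.C θ)⁻¹ ^ (m - 1)) -
            (∑ η : F, (∑ d : F, RatFunc.C d⁻¹) * (RatFunc.X + RatFunc.C η)⁻¹ ^ (m - 1)) +
            ∑ η : F, ((q - 1 : ℕ) : RatFunc F) * (RatFunc.X + RatFunc.C η)⁻¹ ^ m) := by
          congr 2
          · congr 1
            · refine Finset.sum_congr rfl fun θ _ => ?_
              rw [hsigma1 θ]
            · rw [hswap]
              refine Finset.sum_congr rfl fun η _ => ?_
              rw [← Finset.sum_mul, hsigma2 η]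
          · rw [hswap]
            refine Finset.sum_congr rfl fun η _ => ?_
            rw [Finset.sum_const, Finset.card_erase_of_mem (Finset.mem_univ η),
              Finset.card_univ, hF, nsmul_eq_mul]
      _ = ∑ θ : F, (RatFunc.X + RatFunc.C θ)⁻¹ ^ m := by
          have : ((q - 1 : ℕ) : RatFunc F) = -1 := by
            rw [Nat.cast_sub (by omega), hqzero]
            ring
          rw [this]
          simp only [neg_one_mul]
          rw [Finset.sum_neg_distrib]
          ring
  -- conclude
  rw [← h2m]
  simp only [pow_add]
  linear_combination -hmain
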